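/- For any function class F ⊆ (X → {1,-1}) and any f* ∈ F, Edim_{f*}(F) ≤ 4^{max(Sdim_{f*}(F), Tdim_{f*}(F))}. -/
import Mathlib

private lemma ramsey_aux (c : ℕ → ℕ → Bool) :
    ∀ n a b (S : Finset ℕ), a + b ≤ n → Nat.choose (a + b) a ≤ S.card →
      ∃ T ⊆ S, (T.card = a + 1 ∧ ∀ i ∈ T, ∀ j ∈ T, i < j → c i j = true) ∨
        (T.card = b + 1 ∧ ∀ i ∈ T, ∀ j ∈ T, i < j → c i j = false) := by
  intro n
  induction n with
  | zero =>
    intro a b S hab hcard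
    have ha : a = 0 := by omega
    have hb : b = 0 := by omega
    subst ha; subst hb
    simp only [Nat.choose_self] at hcard
    obtain ⟨v, hv⟩ := Finset.card_pos.mp (lt_of_lt_of_le one_pos hcard)
    exact ⟨{v}, Finset.singleton_subset_iff.mpr hv, Or.inl ⟨rfl, by
      intro i hi j hj hij
      simp only [Finset.mem_singleton] at hi hj
      omega⟩⟩
  | succ n ih =>
    intro a b S hab hcard
    rcases a with _ | a'
    · simp only [Nat.choose_zero_right] at hcard
      obtain ⟨v, hv⟩ := Finset.card_pos.mp (lt_of_lt_of_le one_pos hcard)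
      exact ⟨{v}, Finset.singleton_subset_iff.mpr hv, Or.inl ⟨rfl, by
        intro i hi j hj hij
        simp only [Finset.mem_singleton] at hi hj
        omega⟩⟩
    rcases b with _ | b'
    · simp only [Nat.add_zero, Nat.choose_self] at hcard
      obtain ⟨v, hv⟩ := Finset.card_pos.mp (lt_of_lt_of_le one_pos hcard)
      exact ⟨{v}, Finset.singleton_subset_iff.mpr hv, Or.inr ⟨rfl, by
        intro i hi j hj hij
        simp only [Finset.mem_singleton] at hi hj
        omega⟩⟩
    have hSne : S.Nonempty := Finset.card_pos.mp (lt_of_lt_of_le (Nat.choose_pos (by omega)) hcard)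
    set v := S.min' hSne with hvdef
    have hvS : v ∈ S := S.min'_mem hSne
    set S' := S.erase v with hS'
    have hS'card : S'.card = S.card - 1 := Finset.card_erase_of_mem hvS
    set P := S'.filter (fun j => c v j = true) with hP
    set N := S'.filter (fun j => c v j = false) with hN
    have hPN : P.card + N.card = S'.card := by
      rw [hP, hN]
      have h0 := Finset.card_filter_add_card_filter_not (s := S')
        (p := fun j => c v j = true)
      simpa using h0
    have key : Nat.choose (a' + 1 + (b' + 1)) (a' + 1) =
        Nat.choose (a' + (b' + 1)) a' + Nat.choose (a' + 1 + b') (a' + 1) := by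
      have e1 : a' + 1 + (b' + 1) = (a' + b' + 1) + 1 := by omega
      have e2 : a' + (b' + 1) = a' + b' + 1 := by omega
      have e3 : a' + 1 + b' = a' + b' + 1 := by omega
      rw [e1, e2, e3, Nat.choose_succ_succ]
    have hsplit : Nat.choose (a' + (b' + 1)) a' ≤ P.card ∨
        Nat.choose (a' + 1 + b') (a' + 1) ≤ N.card := by
      by_contra h
      push_neg at h
      omega
    rcases hsplit with hPc | hNc
    · obtain ⟨T, hTsub, hT⟩ := ih a' (b' + 1) P (by omega) hPc
      rcases hT with ⟨hTcard, hTtrue⟩ | ⟨hTcard, hTfalse⟩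
      · refine ⟨insert v T, ?_, Or.inl ⟨?_, ?_⟩⟩
        · intro i hi
          rcases Finset.mem_insert.mp hi with h | h
          · subst h; exact hvS
          · exact Finset.mem_of_mem_erase (Finset.mem_of_mem_filter _ (hTsub h))
        · rw [Finset.card_insert_of_notMem, hTcard]
          intro hvT
          have := hTsub hvT
          rw [hP] at this
          exact (Finset.notMem_erase v S) (Finset.mem_of_mem_filter _ this)
        · intro i hi j hj hij
          rcases Finset.mem_insert.mp hi with h | h
          · subst h
            rcases Finset.mem_insert.mp hj with h' | h'
            · omega
            · have := hTsub h'
              rw [hP, Finset.mem_filter] at this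
              exact this.2
          · rcases Finset.mem_insert.mp hj with h' | h'
            · exfalso
              subst h'
              have hiS : i ∈ S := Finset.mem_of_mem_erase (Finset.mem_of_mem_filter _ (hTsub h))
              have := S.min'_le i hiS
              omega
            · exact hTtrue i h j h' hij
      · refine ⟨T, ?_, Or.inr ⟨hTcard, hTfalse⟩⟩
        intro i hi
        exact Finset.mem_of_mem_erase (Finset.mem_of_mem_filter _ (hTsub hi))
    · obtain ⟨T, hTsub, hT⟩ := ih (a' + 1) b' N (by omega) hNc
      rcases hT with ⟨hTcard, hTtrue⟩ | ⟨hTcard, hTfalse⟩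
      · refine ⟨T, ?_, Or.inl ⟨hTcard, hTtrue⟩⟩
        intro i hi
        exact Finset.mem_of_mem_erase (Finset.mem_of_mem_filter _ (hTsub hi))
      · refine ⟨insert v T, ?_, Or.inr ⟨?_, ?_⟩⟩
        · intro i hi
          rcases Finset.mem_insert.mp hi with h | h
          · subst h; exact hvS
          · exact Finset.mem_of_mem_erase (Finset.mem_of_mem_filter _ (hTsub h))
        · rw [Finset.card_insert_of_notMem, hTcard]
          intro hvT
          have := hTsub hvT
          rw [hN] at this
          exact (Finset.notMem_erase v S) (Finset.mem_of_mem_filter _ this)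
        · intro i hi j hj hij
          rcases Finset.mem_insert.mp hi with h | h
          · subst h
            rcases Finset.mem_insert.mp hj with h' | h'
            · omega
            · have := hTsub h'
              rw [hN, Finset.mem_filter] at this
              exact this.2
          · rcases Finset.mem_insert.mp hj with h' | h'
            · exfalso
              subst h'
              have hiS : i ∈ S := Finset.mem_of_mem_erase (Finset.mem_of_mem_filter _ (hTsub h))
              have := S.min'_le i hiS
              omega
            · exact hTfalse i h j h' hij

private lemma central_le_four_pow (k : ℕ) : Nat.choose (k + k) k ≤ 4 ^ k := by
  have h1 : Nat.choose (k + k) k ≤ 2 ^ (k + k) := by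
    calc Nat.choose (k + k) k ≤ ∑ i ∈ Finset.range (k + k + 1), Nat.choose (k + k) i := by
          apply Finset.single_le_sum (f := fun i => Nat.choose (k + k) i)
          · intro i _; exact Nat.zero_le _
          · simp only [Finset.mem_range]; omega
      _ = 2 ^ (k + k) := Nat.sum_range_choose (k + k)
  calc Nat.choose (k + k) k ≤ 2 ^ (k + k) := h1
    _ = 4 ^ k := by rw [pow_add]; rw [show (4:ℕ) = 2 * 2 by norm_num, mul_pow]

/-- `Edim_{f*}(F) ≤ 4^{max(Sdim_{f*}(F), Tdim_{f*}(F))}`, stated via upper bounds: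
if `s` bounds the length of every star witnessing sequence and `t` bounds the length of
every threshold witnessing sequence (in particular one may take `s = Sdim_{f*}(F)` and
`t = Tdim_{f*}(F)`), then every eluder witnessing sequence has length at most
`4 ^ max s t`. -/
theorem stmt_11 {X : Type*} (F : Set (X → ℤ))
    (hsign : ∀ f ∈ F, ∀ x, f x = 1 ∨ f x = -1)
    (fstar : X → ℤ) (hfstar : fstar ∈ F) (s t : ℕ)
    (hs : ∀ (m : ℕ) (x : Fin m → X) (f : Fin m → X → ℤ),
      (∀ i, f i ∈ F) →
      (∀ i : Fin m, f i (x i) ≠ fstar (x i)) →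
      (∀ i j : Fin m, j ≠ i → f i (x j) = fstar (x j)) → m ≤ s)
    (ht : ∀ (m : ℕ) (x : Fin m → X) (f : Fin m → X → ℤ),
      (∀ i, f i ∈ F) →
      (∀ i k : Fin m, i ≤ k → f i (x k) ≠ fstar (x k)) →
      (∀ i j : Fin m, j < i → f i (x j) = fstar (x j)) → m ≤ t) :
    ∀ (m : ℕ) (x : Fin m → X) (f : Fin m → X → ℤ),
      (∀ i, f i ∈ F) →
      (∀ i : Fin m, f i (x i) ≠ fstar (x i)) →
      (∀ i j : Fin m, j < i → f i (x j) = fstar (x j)) →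
      m ≤ 4 ^ max s t := by
  intro m x f hmem hne helu
  by_contra hbig
  push_neg at hbig
  set k := max s t with hk
  -- the 2-coloring
  set c : ℕ → ℕ → Bool := fun i j =>
    if h : i < m ∧ j < m then decide (f ⟨i, h.1⟩ (x ⟨j, h.2⟩) = fstar (x ⟨j, h.2⟩)) else true
    with hc
  have hchoose : Nat.choose (k + k) k ≤ (Finset.range m).card := by
    rw [Finset.card_range]
    exact le_trans (central_le_four_pow k) (le_of_lt hbig)
  obtain ⟨T, hTsub, hT⟩ := ramsey_aux c (k + k) k k (Finset.range m) le_rfl hchoose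
  -- common setup for either clique
  rcases hT with ⟨hTcard, hclique⟩ | ⟨hTcard, hclique⟩
  · -- true clique of size k+1 : star sequence
    set e := T.orderEmbOfFin hTcard with he
    have hmemT : ∀ a : Fin (k + 1), (e a : ℕ) ∈ T := fun a => T.orderEmbOfFin_mem hTcard a
    have hlt : ∀ a : Fin (k + 1), (e a : ℕ) < m := fun a =>
      Finset.mem_range.mp (hTsub (hmemT a))
    set idx : Fin (k + 1) → Fin m := fun a => ⟨e a, hlt a⟩ with hidx
    have := hs (k + 1) (fun a => x (idx a)) (fun a => f (idx a))
      (fun a => hmem (idx a)) (fun a => hne (idx a)) ?_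
    · omega
    intro a b hab
    rcases lt_or_gt_of_ne (fun h : a = b => hab (h ▸ rfl)) with hlt2 | hlt2
    ·
      -- a < b : eluder gives f (idx b)? no: need f (idx a) (x (idx b)) = fstar
      -- a < b means e a < e b, use clique color true
      have hcol := hclique (e a) (hmemT a) (e b) (hmemT b) (e.strictMono hlt2)
      rw [hc] at hcol
      simp only [dif_pos (And.intro (hlt a) (hlt b)), decide_eq_true_eq] at hcol
      exact hcol
    · -- b < a : eluder
      exact helu (idx a) (idx b) (by
        simp only [hidx, Fin.mk_lt_mk]
        exact e.strictMono hlt2)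
  · -- false clique of size k+1 : threshold sequence
    set e := T.orderEmbOfFin hTcard with he
    have hmemT : ∀ a : Fin (k + 1), (e a : ℕ) ∈ T := fun a => T.orderEmbOfFin_mem hTcard a
    have hlt : ∀ a : Fin (k + 1), (e a : ℕ) < m := fun a =>
      Finset.mem_range.mp (hTsub (hmemT a))
    set idx : Fin (k + 1) → Fin m := fun a => ⟨e a, hlt a⟩ with hidx
    have := ht (k + 1) (fun a => x (idx a)) (fun a => f (idx a))
      (fun a => hmem (idx a)) ?_ ?_
    · omega
    · intro a b hab
      rcases eq_or_lt_of_le hab with heq | hlt2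
      · subst heq; exact hne (idx a)
      · have hcol := hclique (e a) (hmemT a) (e b) (hmemT b) (e.strictMono hlt2)
        rw [hc] at hcol
        simp only [dif_pos (And.intro (hlt a) (hlt b)), decide_eq_false_iff_not] at hcol
        exact hcol
    · intro a b hba
      exact helu (idx a) (idx b) (by
        simp only [hidx, Fin.mk_lt_mk]
        exact e.strictMono hba)
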